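/- Let F : ℂ³ → ℝ³ be the Harvey–Lawson map F(z₁,z₂,z₃) = (Im(z₁z₂z₃), |z₁|² − |z₂|², |z₁|² − |z₃|²). For every z ∈ ℂ³, the Fréchet derivative DF_z : ℂ³ → ℝ³ (an ℝ-linear map on ℂ³ ≅ ℝ⁶) fails to be surjective if and only if at least two of the coordinates z₁, z₂, z₃ are zero. Hence the critical locus of F is Crit(F) = ⋃_{i≠j} {z : z_i = z_j = 0}. -/

import Mathlib

/-- The Harvey–Lawson map `F(z) = (Im(z₁z₂z₃), |z₁|² − |z₂|², |z₁|² − |z₃|²)`. -/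
noncomputable def F12 (z : ℂ × ℂ × ℂ) : ℝ × ℝ × ℝ :=
  ((z.1 * z.2.1 * z.2.2).im,
    ‖z.1‖ ^ 2 - ‖z.2.1‖ ^ 2,
    ‖z.1‖ ^ 2 - ‖z.2.2‖ ^ 2)

lemma habs (w : ℂ) : HasFDerivAt (fun w : ℂ => ‖w‖ ^ 2)
    ((Complex.reCLM.comp (w • (Complex.conjCLE : ℂ ≃L[ℝ] ℂ).toContinuousLinearMap
      + ((starRingEnd ℂ) w) • (ContinuousLinearMap.id ℝ ℂ)))) w := by
  have h : HasFDerivAt (fun w : ℂ => (w * (starRingEnd ℂ) w).re)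
      ((Complex.reCLM.comp (w • (Complex.conjCLE : ℂ ≃L[ℝ] ℂ).toContinuousLinearMap
      + ((starRingEnd ℂ) w) • (ContinuousLinearMap.id ℝ ℂ)))) w :=
    Complex.reCLM.hasFDerivAt.comp w
      ((hasFDerivAt_id w).mul (Complex.conjCLE.hasFDerivAt (x := w)))
  have e : (fun w : ℂ => ‖w‖ ^ 2) = fun w : ℂ => (w * (starRingEnd ℂ) w).re := by
    funext w
    rw [Complex.mul_conj]
    simp [Complex.sq_norm]
  rw [e]
  exact h

lemma key (z h : ℂ × ℂ × ℂ) : fderiv ℝ F12 z h =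
    ((h.1 * z.2.1 * z.2.2 + z.1 * h.2.1 * z.2.2 + z.1 * z.2.1 * h.2.2).im,
     2 * ((starRingEnd ℂ) z.1 * h.1).re - 2 * ((starRingEnd ℂ) z.2.1 * h.2.1).re,
     2 * ((starRingEnd ℂ) z.1 * h.1).re - 2 * ((starRingEnd ℂ) z.2.2 * h.2.2).re) := by
  have h1 : HasFDerivAt (fun z : ℂ × ℂ × ℂ => (z.1 * z.2.1 * z.2.2).im) _ z :=
    Complex.imCLM.hasFDerivAt.comp z
      (((hasFDerivAt_fst.mul (hasFDerivAt_snd.fst))).mul (hasFDerivAt_snd.snd))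
  have h2 : HasFDerivAt (fun z : ℂ × ℂ × ℂ =>
      ‖z.1‖ ^ 2 - ‖z.2.1‖ ^ 2) _ z :=
    ((habs z.1).comp z hasFDerivAt_fst).sub (HasFDerivAt.comp (g := fun w : ℂ => ‖w‖ ^ 2) (f := fun z : ℂ × ℂ × ℂ => z.2.1) z
      (habs z.2.1) hasFDerivAt_snd.fst)
  have h3 : HasFDerivAt (fun z : ℂ × ℂ × ℂ =>
      ‖z.1‖ ^ 2 - ‖z.2.2‖ ^ 2) _ z :=
    ((habs z.1).comp z hasFDerivAt_fst).sub (HasFDerivAt.comp (g := fun w : ℂ => ‖w‖ ^ 2) (f := fun z : ℂ × ℂ × ℂ => z.2.2) z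
      (habs z.2.2) hasFDerivAt_snd.snd)
  have H : HasFDerivAt F12 _ z := HasFDerivAt.prodMk h1 (HasFDerivAt.prodMk h2 h3)
  rw [H.fderiv]
  simp [Complex.ext_iff, Complex.add_im, mul_comm, mul_assoc, smul_smul]
  exact ⟨by ring, by ring, by ring⟩

lemma surj_a0 (b c : ℂ) (hb : b ≠ 0) (hc : c ≠ 0) :
    Function.Surjective (fderiv ℝ F12 ((0 : ℂ), b, c)) := by
  rintro ⟨x, y, w⟩
  have hnb : Complex.normSq b ≠ 0 := by simpa using hb
  have hnc : Complex.normSq c ≠ 0 := by simpa using hc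
  refine ⟨(((x / (Complex.normSq b * Complex.normSq c) : ℝ) : ℂ) * (Complex.I *
      ((starRingEnd ℂ) b * (starRingEnd ℂ) c)),
      ((-y / (2 * Complex.normSq b) : ℝ) : ℂ) * b,
      ((-w / (2 * Complex.normSq c) : ℝ) : ℂ) * c), ?_⟩
  rw [key]
  simp only [Prod.mk.injEq, Complex.mul_re, Complex.mul_im, Complex.ofReal_re,
    Complex.ofReal_im, Complex.I_re, Complex.I_im, Complex.conj_re, Complex.conj_im,
    Complex.zero_re, Complex.zero_im, map_zero, mul_zero, zero_mul, sub_zero, zero_sub,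
    add_zero, zero_add, neg_zero, neg_neg, Complex.add_re, Complex.add_im]
  have h2b : b.re * b.re + b.im * b.im ≠ 0 := by
    simpa [Complex.normSq_apply] using hnb
  have h2c : c.re * c.re + c.im * c.im ≠ 0 := by
    simpa [Complex.normSq_apply] using hnc
  refine ⟨?_, ?_, ?_⟩ <;>
    · simp only [Complex.normSq_apply]
      field_simp [show b.re ^ 2 + b.im ^ 2 ≠ 0 by rw [sq, sq]; exact h2b,
        show c.re ^ 2 + c.im ^ 2 ≠ 0 by rw [sq, sq]; exact h2c]
      ring

lemma surj_b0 (a c : ℂ) (ha : a ≠ 0) (hc : c ≠ 0) :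
    Function.Surjective (fderiv ℝ F12 (a, (0 : ℂ), c)) := by
  rintro ⟨x, y, w⟩
  have hna : Complex.normSq a ≠ 0 := by simpa using ha
  have hnc : Complex.normSq c ≠ 0 := by simpa using hc
  refine ⟨(((y / (2 * Complex.normSq a) : ℝ) : ℂ) * a,
      ((x / (Complex.normSq a * Complex.normSq c) : ℝ) : ℂ) * (Complex.I *
      ((starRingEnd ℂ) a * (starRingEnd ℂ) c)),
      (((y - w) / (2 * Complex.normSq c) : ℝ) : ℂ) * c), ?_⟩
  rw [key]
  simp only [Prod.mk.injEq, Complex.mul_re, Complex.mul_im, Complex.ofReal_re,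
    Complex.ofReal_im, Complex.I_re, Complex.I_im, Complex.conj_re, Complex.conj_im,
    Complex.zero_re, Complex.zero_im, map_zero, mul_zero, zero_mul, sub_zero, zero_sub,
    add_zero, zero_add, neg_zero, neg_neg, Complex.add_re, Complex.add_im]
  have h2a : a.re * a.re + a.im * a.im ≠ 0 := by
    simpa [Complex.normSq_apply] using hna
  have h2c : c.re * c.re + c.im * c.im ≠ 0 := by
    simpa [Complex.normSq_apply] using hnc
  refine ⟨?_, ?_, ?_⟩ <;>
    · simp only [Complex.normSq_apply]
      field_simp [show a.re ^ 2 + a.im ^ 2 ≠ 0 by rw [sq, sq]; exact h2a,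
        show c.re ^ 2 + c.im ^ 2 ≠ 0 by rw [sq, sq]; exact h2c]
      ring

lemma surj_c0 (a b : ℂ) (ha : a ≠ 0) (hb : b ≠ 0) :
    Function.Surjective (fderiv ℝ F12 (a, b, (0 : ℂ))) := by
  rintro ⟨x, y, w⟩
  have hna : Complex.normSq a ≠ 0 := by simpa using ha
  have hnb : Complex.normSq b ≠ 0 := by simpa using hb
  refine ⟨(((w / (2 * Complex.normSq a) : ℝ) : ℂ) * a,
      (((w - y) / (2 * Complex.normSq b) : ℝ) : ℂ) * b,
      ((x / (Complex.normSq a * Complex.normSq b) : ℝ) : ℂ) * (Complex.I *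
      ((starRingEnd ℂ) a * (starRingEnd ℂ) b))), ?_⟩
  rw [key]
  simp only [Prod.mk.injEq, Complex.mul_re, Complex.mul_im, Complex.ofReal_re,
    Complex.ofReal_im, Complex.I_re, Complex.I_im, Complex.conj_re, Complex.conj_im,
    Complex.zero_re, Complex.zero_im, map_zero, mul_zero, zero_mul, sub_zero, zero_sub,
    add_zero, zero_add, neg_zero, neg_neg, Complex.add_re, Complex.add_im]
  have h2a : a.re * a.re + a.im * a.im ≠ 0 := by
    simpa [Complex.normSq_apply] using hna
  have h2b : b.re * b.re + b.im * b.im ≠ 0 := by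
    simpa [Complex.normSq_apply] using hnb
  refine ⟨?_, ?_, ?_⟩ <;>
    · simp only [Complex.normSq_apply]
      field_simp [show a.re ^ 2 + a.im ^ 2 ≠ 0 by rw [sq, sq]; exact h2a,
        show b.re ^ 2 + b.im ^ 2 ≠ 0 by rw [sq, sq]; exact h2b]
      ring

lemma ofReal_mul_im' (r : ℝ) (z : ℂ) : ((r : ℂ) * z).im = r * z.im := by
  simp [Complex.mul_im]

lemma conj_mul_self_mul (a s : ℂ) :
    (starRingEnd ℂ) a * (a * s) = ((Complex.normSq a : ℝ) : ℂ) * s := by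
  calc (starRingEnd ℂ) a * (a * s) = (a * (starRingEnd ℂ) a) * s := by ring
    _ = ((Complex.normSq a : ℝ) : ℂ) * s := by rw [Complex.mul_conj]

lemma solve1 (na nc M R x y w : ℝ) (hna : na ≠ 0) (hnc : nc ≠ 0) (hR : R ≠ 0) :
    ∃ s1 s3 t1 : ℝ, 2 * na * s1 = y ∧ 2 * na * s1 - 2 * nc * s3 = w ∧
      (s1 + s3) * M + t1 * R = x := by
  refine ⟨y / (2 * na), (y - w) / (2 * nc),
    (x - (y / (2 * na) + (y - w) / (2 * nc)) * M) / R, ?_, ?_, ?_⟩ <;> field_simp <;> ring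

lemma solve2 (na nb nc M x y w : ℝ) (hna : 0 < na) (hnb : 0 < nb) (hnc : 0 < nc)
    (hM : M ≠ 0) :
    ∃ s1 s2 s3 : ℝ, 2 * na * s1 - 2 * nb * s2 = y ∧ 2 * na * s1 - 2 * nc * s3 = w ∧
      (s1 + s2 + s3) * M = x := by
  have hK : nb * nc + na * nc + na * nb ≠ 0 := by positivity
  set τ : ℝ := (2 * nb * nc * (x / M) + nc * y + nb * w) /
    (2 * (nb * nc + na * nc + na * nb)) with hτ
  refine ⟨τ, (2 * na * τ - y) / (2 * nb), (2 * na * τ - w) / (2 * nc), ?_, ?_, ?_⟩ <;>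
    rw [hτ] <;> field_simp <;> ring

lemma surj_all (a b c : ℂ) (ha : a ≠ 0) (hb : b ≠ 0) (hc : c ≠ 0) :
    Function.Surjective (fderiv ℝ F12 (a, b, c)) := by
  rintro ⟨x, y, w⟩
  have hna : (0 : ℝ) < Complex.normSq a := Complex.normSq_pos.mpr ha
  have hnb : (0 : ℝ) < Complex.normSq b := Complex.normSq_pos.mpr hb
  have hnc : (0 : ℝ) < Complex.normSq c := Complex.normSq_pos.mpr hc
  by_cases hR : (a * b * c).re = 0
  · -- imaginary part nonzero
    have habc : a * b * c ≠ 0 := by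
      exact mul_ne_zero (mul_ne_zero ha hb) hc
    have hM : (a * b * c).im ≠ 0 := by
      intro hM
      exact habc (Complex.ext hR (by simpa using hM))
    obtain ⟨s1, s2, s3, e2, e3, e1⟩ := solve2 (Complex.normSq a) (Complex.normSq b)
      (Complex.normSq c) ((a * b * c).im) x y w hna hnb hnc hM
    refine ⟨(a * (s1 : ℂ), b * (s2 : ℂ), c * (s3 : ℂ)), ?_⟩
    rw [key]
    simp only [Prod.mk.injEq]
    have E1 : a * (s1 : ℂ) * b * c + a * (b * (s2 : ℂ)) * c + a * b * (c * (s3 : ℂ))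
        = ((s1 + s2 + s3 : ℝ) : ℂ) * (a * b * c) := by push_cast; ring
    refine ⟨?_, ?_, ?_⟩
    · rw [E1, ofReal_mul_im']
      exact e1
    · rw [conj_mul_self_mul, conj_mul_self_mul, ← Complex.ofReal_mul, ← Complex.ofReal_mul,
        Complex.ofReal_re, Complex.ofReal_re]
      linarith [e2]
    · rw [conj_mul_self_mul, conj_mul_self_mul, ← Complex.ofReal_mul, ← Complex.ofReal_mul,
        Complex.ofReal_re, Complex.ofReal_re]
      linarith [e3]
  · obtain ⟨s1, s3, t1, e2, e3, e1⟩ := solve1 (Complex.normSq a) (Complex.normSq c)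
      ((a * b * c).im) ((a * b * c).re) x y w hna.ne' hnc.ne' hR
    refine ⟨(a * ((s1 : ℂ) + (t1 : ℂ) * Complex.I), 0, c * (s3 : ℂ)), ?_⟩
    rw [key]
    simp only [Prod.mk.injEq]
    have E1 : a * ((s1 : ℂ) + (t1 : ℂ) * Complex.I) * b * c + a * 0 * c
        + a * b * (c * (s3 : ℂ))
        = ((s1 + s3 : ℝ) : ℂ) * (a * b * c) + (t1 : ℂ) * (Complex.I * (a * b * c)) := by
      push_cast; ring
    refine ⟨?_, ?_, ?_⟩
    · rw [E1, Complex.add_im, ofReal_mul_im', ofReal_mul_im', Complex.I_mul_im]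
      exact e1
    · rw [conj_mul_self_mul, mul_zero, Complex.zero_re]
      have : (((Complex.normSq a : ℝ) : ℂ) * ((s1 : ℂ) + (t1 : ℂ) * Complex.I)).re
          = Complex.normSq a * s1 := by
        simp [Complex.mul_re, Complex.add_re, Complex.add_im]
      rw [this]
      linarith [e2]
    · rw [conj_mul_self_mul, conj_mul_self_mul]
      have h1 : (((Complex.normSq a : ℝ) : ℂ) * ((s1 : ℂ) + (t1 : ℂ) * Complex.I)).re
          = Complex.normSq a * s1 := by
        simp [Complex.mul_re, Complex.add_re, Complex.add_im]
      rw [h1, ← Complex.ofReal_mul, Complex.ofReal_re]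
      linarith [e3]

/-- The critical locus of the Harvey–Lawson fibration: `DF_z` fails to be surjective
exactly when at least two of the coordinates vanish. -/
theorem stmt12 :
    ∀ z : ℂ × ℂ × ℂ,
      ¬ Function.Surjective (fderiv ℝ F12 z) ↔
        (z.1 = 0 ∧ z.2.1 = 0) ∨ (z.1 = 0 ∧ z.2.2 = 0) ∨ (z.2.1 = 0 ∧ z.2.2 = 0) := by
  rintro ⟨a, b, c⟩
  constructor
  · intro hns
    by_contra hcon
    push_neg at hcon
    obtain ⟨h1, h2, h3⟩ := hcon
    apply hns
    by_cases ha : a = 0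
    · subst ha
      exact surj_a0 b c (h1 rfl) (h2 rfl)
    · by_cases hbz : b = 0
      · subst hbz
        exact surj_b0 a c ha (h3 rfl)
      · by_cases hcz : c = 0
        · subst hcz
          exact surj_c0 a b ha hbz
        · exact surj_all a b c ha hbz hcz
  · intro hcase hsurj
    obtain ⟨h, hh⟩ := hsurj (1, 0, 0)
    rw [key] at hh
    rcases hcase with ⟨ha, hbz⟩ | ⟨ha, hcz⟩ | ⟨hbz, hcz⟩
    · replace ha : a = 0 := ha
      replace hbz : b = 0 := hbz
      simp [ha, hbz, Prod.ext_iff] at hh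
    · replace ha : a = 0 := ha
      replace hcz : c = 0 := hcz
      simp [ha, hcz, Prod.ext_iff] at hh
    · replace hbz : b = 0 := hbz
      replace hcz : c = 0 := hcz
      simp [hbz, hcz, Prod.ext_iff] at hh
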